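/- Let A be a unital C*-algebra, φ : A → B(H) completely positive with minimal Stinespring dilation φ = V* ρ(·) V on K. For T in the commutant ρ(A)' with 0 ≤ T ≤ 1_K, the map φ_T(a) := V* T ρ(a) V is completely positive and satisfies 0 ≤ φ_T ≤ φ in the order where ψ₁ ≤ ψ₂ means ψ₂ − ψ₁ is completely positive. -/

import Mathlib

set_option maxHeartbeats 1000000
set_option synthInstance.maxHeartbeats 400000
set_option linter.unusedSectionVars false

noncomputable section
open ContinuousLinearMap

/-- Complete positivity via matrix amplifications. -/
def IsCPMap {A B : Type*} [NonUnitalRing A] [StarRing A] [Module ℂ A]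
    [NonUnitalRing B] [StarRing B] [Module ℂ B] (φ : A →ₗ[ℂ] B) : Prop :=
  ∀ (n : ℕ) (a : Matrix (Fin n) (Fin n) A),
    (∃ b : Matrix (Fin n) (Fin n) A, a = star b * b) →
      ∃ c : Matrix (Fin n) (Fin n) B, a.map φ = star c * c

variable {A : Type*} [CStarAlgebra A]
variable {H K : Type*} [NormedAddCommGroup H] [InnerProductSpace ℂ H] [CompleteSpace H]
  [NormedAddCommGroup K] [InnerProductSpace ℂ K] [CompleteSpace K]

/-- The map `X ↦ V* (T ∘ X) V`, as a linear map. -/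
def conjMap (V : H →L[ℂ] K) (T : K →L[ℂ] K) : (K →L[ℂ] K) →ₗ[ℂ] (H →L[ℂ] H) where
  toFun X := (adjoint V) ∘L (T ∘L (X ∘L V))
  map_add' X Y := by simp [add_comp, comp_add]
  map_smul' c X := by simp [smul_comp, comp_smul]

section OpMatrix

variable {n : ℕ}

instance : CompleteSpace (PiLp 2 (fun _ : Fin n => H)) :=
  inferInstance

/-- Coordinate inclusion `H →L[ℂ] H^n`. -/
def sgl (n : ℕ) (j : Fin n) : H →L[ℂ] PiLp 2 (fun _ : Fin n => H) :=
  (PiLp.continuousLinearEquiv 2 ℂ (fun _ : Fin n => H)).symm.toContinuousLinearMap ∘L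
    ContinuousLinearMap.pi (fun i => if i = j then ContinuousLinearMap.id ℂ H else 0)

/-- Coordinate projection `H^n →L[ℂ] H`. -/
def prj (n : ℕ) (i : Fin n) : PiLp 2 (fun _ : Fin n => H) →L[ℂ] H :=
  ContinuousLinearMap.proj i ∘L
    (PiLp.continuousLinearEquiv 2 ℂ (fun _ : Fin n => H)).toContinuousLinearMap

@[simp] lemma prj_apply (i : Fin n) (x : PiLp 2 (fun _ : Fin n => H)) :
    prj n i x = x i := rfl

@[simp] lemma sgl_apply (j : Fin n) (h : H) (i : Fin n) :
    sgl n j h i = if i = j then h else 0 := by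
  simp [sgl, ContinuousLinearMap.pi]
  split <;> rfl

/-- The operator on `H^n` associated to a matrix of operators. -/
def toOp (M : Matrix (Fin n) (Fin n) (H →L[ℂ] H)) :
    PiLp 2 (fun _ : Fin n => H) →L[ℂ] PiLp 2 (fun _ : Fin n => H) :=
  (PiLp.continuousLinearEquiv 2 ℂ (fun _ : Fin n => H)).symm.toContinuousLinearMap ∘L
    ContinuousLinearMap.pi (fun i => ∑ j, M i j ∘L prj n j)

@[simp] lemma toOp_apply (M : Matrix (Fin n) (Fin n) (H →L[ℂ] H))
    (x : PiLp 2 (fun _ : Fin n => H)) (i : Fin n) :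
    toOp M x i = ∑ j, M i j (x j) := by
  simp [toOp, ContinuousLinearMap.pi]

lemma adjoint_sgl (j : Fin n) : adjoint (sgl (H := H) n j) = prj n j := by
  symm
  rw [eq_adjoint_iff]
  intro x y
  rw [PiLp.inner_apply, prj_apply]
  have key : ∀ k : Fin n, (inner ℂ (x k) (sgl n j y k) : ℂ)
      = if k = j then inner ℂ (x j) y else 0 := by
    intro k
    rw [sgl_apply]
    split
    · rename_i hk; rw [hk]
    · exact inner_zero_right _
  rw [Finset.sum_congr rfl fun k _ => key k]
  simp

lemma adjoint_prj (i : Fin n) : adjoint (prj (H := H) n i) = sgl n i := by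
  rw [← adjoint_sgl, adjoint_adjoint]

lemma sum_sgl_apply (y : PiLp 2 (fun _ : Fin n => H)) :
    ∑ k, sgl n k (y k) = y := by
  ext i
  have : (∑ k, sgl n k (y k)) i = ∑ k, sgl n k (y k) i := by
    rw [WithLp.ofLp_sum]; exact Finset.sum_apply i Finset.univ (fun k => sgl n k (y k))
  rw [this]
  simp

/-- Block recovery. -/
lemma prj_toOp_sgl (M : Matrix (Fin n) (Fin n) (H →L[ℂ] H)) (i j : Fin n) :
    prj n i ∘L (toOp M ∘L sgl n j) = M i j := by
  ext h
  simp only [comp_apply, prj_apply, toOp_apply, sgl_apply]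
  have key : ∀ k : Fin n, (M i k) (if k = j then h else 0)
      = if k = j then M i j h else 0 := by
    intro k
    split
    · rename_i hk; rw [hk]
    · exact map_zero _
  rw [Finset.sum_congr rfl fun k _ => key k]
  simp

/-- Any matrix of operators whose associated operator is nonneg is of the form `star c * c`. -/
lemma exists_factor (M : Matrix (Fin n) (Fin n) (H →L[ℂ] H)) (hM : 0 ≤ toOp M) :
    ∃ c : Matrix (Fin n) (Fin n) (H →L[ℂ] H), M = star c * c := by
  obtain ⟨S, hS⟩ : ∃ S, adjoint S ∘L S = toOp M := by
    refine ⟨CFC.sqrt (toOp M), ?_⟩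
    have h1 : star (CFC.sqrt (toOp M) : PiLp 2 (fun _ : Fin n => H) →L[ℂ] PiLp 2 (fun _ : Fin n => H)) = CFC.sqrt (toOp M) :=
      (IsSelfAdjoint.of_nonneg (CFC.sqrt_nonneg (toOp M))).star_eq
    have h2 : CFC.sqrt (toOp M) * CFC.sqrt (toOp M) = toOp M := CFC.sqrt_mul_sqrt_self _ hM
    calc adjoint (CFC.sqrt (toOp M)) ∘L CFC.sqrt (toOp M)
        = star (CFC.sqrt (toOp M)) * CFC.sqrt (toOp M) := rfl
      _ = toOp M := by rw [h1, h2]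
  refine ⟨fun i j => prj n i ∘L (S ∘L sgl n j), ?_⟩
  refine Matrix.ext fun i j => ?_
  erw [Matrix.mul_apply]
  have key : ∀ k : Fin n, (star (fun i j => prj n i ∘L (S ∘L sgl (H := H) n j)) : Matrix _ _ _) i k
      * (prj n k ∘L (S ∘L sgl n j))
      = (prj n i ∘L (adjoint S ∘L sgl n k)) ∘L ((prj n k ∘L (S ∘L sgl n j))) := by
    intro k
    simp only [Matrix.star_apply]
    congr 1
    calc star (prj n k ∘L (S ∘L sgl (H := H) n i))
        = adjoint (prj n k ∘L (S ∘L sgl (H := H) n i)) := rfl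
      _ = adjoint (S ∘L sgl n i) ∘L adjoint (prj n k) := by rw [adjoint_comp]
      _ = (adjoint (sgl n i) ∘L adjoint S) ∘L sgl n k := by rw [adjoint_comp, adjoint_prj]
      _ = prj n i ∘L (adjoint S ∘L sgl n k) := by rw [adjoint_sgl, comp_assoc]
  rw [Finset.sum_congr rfl (fun k _ => key k)]
  -- now sum over k
  refine ContinuousLinearMap.ext fun h => ?_
  have expand : ∀ k, ((prj n i ∘L (adjoint S ∘L sgl n k)) ∘L (prj n k ∘L (S ∘L sgl n j))) h
      = adjoint S (sgl n k ((S (sgl n j h)) k)) i := fun k => rfl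
  calc M i j h = (prj n i ∘L (toOp M ∘L sgl n j)) h := by rw [prj_toOp_sgl]
    _ = adjoint S (S (sgl n j h)) i := by rw [← hS]; rfl
    _ = adjoint S (∑ k, sgl n k ((S (sgl n j h)) k)) i := by rw [sum_sgl_apply]
    _ = (∑ k, adjoint S (sgl n k ((S (sgl n j h)) k))) i := by rw [map_sum]
    _ = ∑ k, adjoint S (sgl n k ((S (sgl n j h)) k)) i :=
        by rw [WithLp.ofLp_sum]; exact Finset.sum_apply i Finset.univ _
    _ = ∑ k, ((prj n i ∘L (adjoint S ∘L sgl n k)) ∘L (prj n k ∘L (S ∘L sgl n j))) h := by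
        simp [expand]
    _ = (∑ k, (prj n i ∘L (adjoint S ∘L sgl n k)) ∘L (prj n k ∘L (S ∘L sgl n j))) h := by
        rw [ContinuousLinearMap.sum_apply]

end OpMatrix

/-- Key lemma: if `T ≥ 0` commutes with the range of `ρ`, then `a ↦ V* T ρ(a) V` is CP. -/
lemma isCPMap_conj (ρ : A →⋆ₐ[ℂ] (K →L[ℂ] K)) (V : H →L[ℂ] K) (T : K →L[ℂ] K)
    (hcomm : ∀ a : A, T ∘L ρ a = ρ a ∘L T) (hT0 : 0 ≤ T) :
    IsCPMap ((conjMap V T).comp ρ.toLinearMap) := by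
  rintro n a ⟨b, rfl⟩
  apply exists_factor
  rw [ContinuousLinearMap.nonneg_iff_isPositive, ContinuousLinearMap.isPositive_iff_complex]
  intro x
  have hTpos := (ContinuousLinearMap.nonneg_iff_isPositive T).1 hT0
  have hTc := (ContinuousLinearMap.isPositive_iff_complex T).1 hTpos
  set ψ : A →ₗ[ℂ] (H →L[ℂ] H) := (conjMap V T).comp ρ.toLinearMap with hψ
  set y : Fin n → K := fun k => ∑ j, ρ (b k j) (V (x j)) with hy
  have key : (inner ℂ (toOp ((star b * b).map ψ) x) x : ℂ) = ∑ k, inner ℂ (T (y k)) (y k) := by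
    rw [PiLp.inner_apply]
    have e1 : ∀ i, (inner ℂ ((toOp ((star b * b).map ψ) x) i) (x i) : ℂ)
        = ∑ j, ∑ k, inner ℂ (T (ρ (b k j) (V (x j)))) (ρ (b k i) (V (x i))) := by
      intro i
      rw [toOp_apply, sum_inner]
      refine Finset.sum_congr rfl fun j _ => ?_
      have : ((star b * b).map ψ) i j = ∑ k, ψ (star (b k i) * b k j) := by
        simp [Matrix.map_apply, Matrix.mul_apply, Matrix.star_apply, map_sum]
      rw [this, ContinuousLinearMap.sum_apply, sum_inner]
      refine Finset.sum_congr rfl fun k _ => ?_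
      have hterm : ψ (star (b k i) * b k j) (x j)
          = adjoint V (ρ (star (b k i)) (T (ρ (b k j) (V (x j))))) := by
        have h0 : ψ (star (b k i) * b k j) (x j)
            = adjoint V (T (ρ (star (b k i) * b k j) (V (x j)))) := rfl
        rw [h0, map_mul]
        have h1 : (ρ (star (b k i)) * ρ (b k j)) (V (x j))
            = ρ (star (b k i)) (ρ (b k j) (V (x j))) := rfl
        rw [h1]
        have h2 := DFunLike.congr_fun (hcomm (star (b k i))) (ρ (b k j) (V (x j)))
        simp only [comp_apply] at h2
        rw [h2]
      rw [hterm, adjoint_inner_left]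
      have : ρ (star (b k i)) = adjoint (ρ (b k i)) := by
        rw [map_star]; rfl
      rw [this, adjoint_inner_left]
    rw [Finset.sum_congr rfl fun i _ => e1 i]
    have swap : ∀ f : Fin n → Fin n → Fin n → ℂ,
        ∑ i, ∑ j, ∑ k, f i j k = ∑ k, ∑ j, ∑ i, f i j k := by
      intro f
      calc ∑ i, ∑ j, ∑ k, f i j k
          = ∑ i, ∑ k, ∑ j, f i j k := Finset.sum_congr rfl fun i _ => Finset.sum_comm
        _ = ∑ k, ∑ i, ∑ j, f i j k := Finset.sum_comm
        _ = ∑ k, ∑ j, ∑ i, f i j k := Finset.sum_congr rfl fun k _ => Finset.sum_comm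
    rw [swap]
    refine Finset.sum_congr rfl fun k _ => ?_
    simp only [hy]
    rw [map_sum, sum_inner]
    refine Finset.sum_congr rfl fun j _ => ?_
    rw [inner_sum]
  rw [key]
  constructor
  · rw [map_sum]
    push_cast
    refine Finset.sum_congr rfl fun k _ => ?_
    exact (hTc (y k)).1
  · rw [map_sum]
    exact Finset.sum_nonneg fun k _ => (hTc (y k)).2

theorem radon_nikodym_cp_le
    (φ : A →ₗ[ℂ] (H →L[ℂ] H)) (hcp : IsCPMap φ)
    (ρ : A →⋆ₐ[ℂ] (K →L[ℂ] K)) (V : H →L[ℂ] K)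
    (hdil : ∀ a, φ a = (adjoint V) ∘L ((ρ a) ∘L V))
    (hmin : (Submodule.span ℂ {x : K | ∃ a, ∃ h : H, ρ a (V h) = x}).topologicalClosure = ⊤)
    (T : K →L[ℂ] K) (hT : T ∈ Set.centralizer (Set.range (⇑ρ)))
    (hT0 : 0 ≤ T) (hT1 : T ≤ 1) :
    IsCPMap ((conjMap V T).comp ρ.toLinearMap) ∧
      IsCPMap (φ - (conjMap V T).comp ρ.toLinearMap) := by
  have hcomm : ∀ a : A, T ∘L ρ a = ρ a ∘L T := by
    intro a
    have := hT (ρ a) ⟨a, rfl⟩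
    calc T ∘L ρ a = T * ρ a := rfl
      _ = ρ a * T := this.symm
      _ = ρ a ∘L T := rfl
  constructor
  · exact isCPMap_conj ρ V T hcomm hT0
  · have heq : φ - (conjMap V T).comp ρ.toLinearMap = (conjMap V (1 - T)).comp ρ.toLinearMap := by
      ext a
      simp only [LinearMap.sub_apply, LinearMap.comp_apply, AlgHom.toLinearMap_apply, conjMap,
        LinearMap.coe_mk, AddHom.coe_mk, hdil a]
      rw [sub_comp, one_def, id_comp, comp_sub]
      rfl
    rw [heq]
    refine isCPMap_conj ρ V (1 - T) ?_ (sub_nonneg.2 hT1)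
    intro a
    rw [sub_comp, comp_sub, hcomm a, one_def, id_comp, comp_id]
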